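/- Polynomial interpolation for degeneration: if t ⊵^e t' (t degenerates to t' with error degree e, i.e. there are ε-polynomial-valued linear maps m_j(ε) with (m₁(ε)⊗⋯⊗m_k(ε))t = ε^d t' + ε^{d+1}t₁ + ⋯ + ε^{d+e}t_e for some tensors t_i), then the (e+1)-fold direct sum ⊕_{i=1}^{e+1} t restricts to t'. -/

import Mathlib

open scoped BigOperators

/-- A `k`-tensor with index set `ι j` in the `j`-th factor. -/
def MTensor {k : ℕ} (ι : Fin k → Type) : Type := ((j : Fin k) → ι j) → ℂ

/-- Restriction of tensors: `t ≥ t'` iff `t' = (m₁ ⊗ ⋯ ⊗ m_k) t` for linear maps `m_j`. -/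
def mres {k : ℕ} {ι ι' : Fin k → Type} [∀ j, Fintype (ι j)]
    (t : MTensor ι) (t' : MTensor ι') : Prop :=
  ∃ m : (j : Fin k) → ι' j → ι j → ℂ,
    ∀ x : (j : Fin k) → ι' j,
      t' x = ∑ y : (j : Fin k) → ι j, (∏ j, m j (x j) (y j)) * t y

/-- The unit tensor (GHZ-state) `GHZ_r^{(k)} = Σ_{i=1}^r e_i ⊗ ⋯ ⊗ e_i`. -/
def GHZ (k r : ℕ) : MTensor (fun _ : Fin k => Fin r) :=
  fun x => if ∃ i : Fin r, ∀ j, x j = i then 1 else 0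

/-- Kronecker tensor product of two k-tensors, grouping corresponding factors. -/
def kron {k : ℕ} {ι κ : Fin k → Type} (s : MTensor ι) (t : MTensor κ) :
    MTensor (fun j => ι j × κ j) :=
  fun x => s (fun j => (x j).1) * t (fun j => (x j).2)

/-- Direct sum of two k-tensors (block embedding). -/
def dsum {k : ℕ} {ι κ : Fin k → Type} (s : MTensor ι) (t : MTensor κ) :
    MTensor (fun j => ι j ⊕ κ j) :=
  fun x =>
    (if h : ∀ j, (x j).isLeft then s (fun j => (x j).getLeft (h j)) else 0)
      + (if h : ∀ j, (x j).isRight then t (fun j => (x j).getRight (h j)) else 0)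

/-- `r`-fold direct sum `⊕_{i=1}^r t` of a k-tensor (block-diagonal embedding). -/
def dsumPow {k : ℕ} (r : ℕ) {ι : Fin k → Type} (t : MTensor ι) :
    MTensor (fun j => Fin r × ι j) :=
  fun x => if ∃ i : Fin r, ∀ j, (x j).1 = i then t (fun j => (x j).2) else 0

/-- `t` has tensor rank at most `r`: it is a sum of `r` simple tensors. -/
def HasRankLE {k : ℕ} {ι : Fin k → Type} (t : MTensor ι) (r : ℕ) : Prop :=
  ∃ v : Fin r → (j : Fin k) → ι j → ℂ,
    ∀ x, t x = ∑ l : Fin r, ∏ j, v l j (x j)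

/-- Tensor rank: the least `r` such that `t` is a sum of `r` simple tensors,
equivalently the least `r` with `GHZ_r ≥ t`. -/
noncomputable def trank {k : ℕ} {ι : Fin k → Type} (t : MTensor ι) : ℕ :=
  sInf {r | HasRankLE t r}

private lemma vand_aux (n d : ℕ) :
    ∃ c : Fin (n + 1) → ℂ, ∀ r : Fin (n + 1),
      ∑ i : Fin (n + 1), c i * (((i : ℕ) : ℂ) + 1) ^ (d + (r : ℕ)) =
        if r = 0 then 1 else 0 := by
  classical
  set v : Fin (n + 1) → ℂ := fun i => ((i : ℕ) : ℂ) + 1 with hv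
  have hvne : ∀ i, v i ≠ 0 := fun i => by
    simpa [hv] using Nat.cast_add_one_ne_zero (R := ℂ) (i : ℕ)
  have hinj : Function.Injective v := by
    intro a b hab
    have hab' : ((a : ℕ) : ℂ) = ((b : ℕ) : ℂ) := by
      have := hab; simp only [hv] at this
      exact add_right_cancel this
    exact Fin.ext (Nat.cast_injective hab')
  set A : Matrix (Fin (n + 1)) (Fin (n + 1)) ℂ := (Matrix.vandermonde v).transpose with hA
  have hdet : IsUnit A.det := by
    rw [hA, Matrix.det_transpose, Matrix.det_vandermonde]
    refine isUnit_iff_ne_zero.mpr (Finset.prod_ne_zero_iff.mpr fun i _ =>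
      Finset.prod_ne_zero_iff.mpr fun j hj => sub_ne_zero.mpr fun hEq => ?_)
    exact (Finset.mem_Ioi.mp hj).ne' (hinj hEq)
  set c' : Fin (n + 1) → ℂ := A⁻¹.mulVec (Pi.single 0 1) with hc'
  have hAc' : A.mulVec c' = Pi.single 0 1 := by
    rw [hc', Matrix.mulVec_mulVec, Matrix.mul_nonsing_inv A hdet, Matrix.one_mulVec]
  refine ⟨fun i => c' i / v i ^ d, fun r => ?_⟩
  have h1 : ∑ i, c' i / v i ^ d * v i ^ (d + (r : ℕ)) = ∑ i, v i ^ (r : ℕ) * c' i := by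
    refine Finset.sum_congr rfl fun i _ => ?_
    rw [pow_add, ← mul_assoc, div_mul_cancel₀ _ (pow_ne_zero _ (hvne i)), mul_comm]
  have h2 : ∑ i, v i ^ (r : ℕ) * c' i = (A.mulVec c') r := by
    simp [Matrix.mulVec, dotProduct, hA, Matrix.vandermonde]
  rw [h1, h2, hAc', Pi.single_apply]

private def pairEquiv {k : ℕ} (α β : Fin k → Type) :
    (((j : Fin k) → α j) × ((j : Fin k) → β j)) ≃ ((j : Fin k) → α j × β j) where
  toFun p j := (p.1 j, p.2 j)
  invFun y := (fun j => (y j).1, fun j => (y j).2)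
  left_inv _ := rfl
  right_inv _ := rfl


/-- polynomial interpolation: if `t ⊵^e t'`, i.e. there are matrices
`m_j(ε)` with polynomial entries such that
`(m₁(ε)⊗⋯⊗m_k(ε)) t = ε^d t' + Σ_{i=1}^e ε^{d+i} t_i`,
then the `(e+1)`-fold direct sum `⊕_{i=1}^{e+1} t` restricts to `t'`. -/
theorem interpolation {k e d : ℕ} {ι ι' : Fin k → Type}
    [∀ j, Fintype (ι j)] [∀ j, Fintype (ι' j)]
    (t : MTensor ι) (t' : MTensor ι')
    (m : (j : Fin k) → ι' j → ι j → Polynomial ℂ)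
    (terr : Fin e → MTensor ι')
    (h : ∀ x' : (j : Fin k) → ι' j,
      (∑ y : (j : Fin k) → ι j, (∏ j, m j (x' j) (y j)) * Polynomial.C (t y))
        = Polynomial.C (t' x') * Polynomial.X ^ d
          + ∑ i : Fin e, Polynomial.C (terr i x') * Polynomial.X ^ (d + 1 + (i : ℕ))) :
    mres (dsumPow (e + 1) t) t' := by
  classical
  rcases Nat.eq_zero_or_pos k with hk | hk
  · -- degenerate case k = 0
    subst hk
    refine ⟨fun j => j.elim0, fun x => ?_⟩
    have h0 := h x
    simp only [Fin.prod_univ_zero, one_mul] at h0 ⊢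
    rw [Fintype.sum_unique] at h0
    refine (?_ : t' x = dsumPow (e+1) t default).trans (Finset.sum_eq_single default
      (fun b _ hb => absurd (Subsingleton.elim b default) hb) (fun hn => absurd (Finset.mem_univ _) hn)).symm
    have hd := congrArg (Polynomial.coeff · d) h0
    have h00 := congrArg (Polynomial.coeff · 0) h0
    simp [Polynomial.coeff_C, Polynomial.coeff_X_pow, Polynomial.coeff_C_mul,
      Polynomial.finset_sum_coeff] at hd h00
    have hsum1 : ∑ i : Fin e, (if d = d + 1 + (i:ℕ) then terr i x else 0) = 0 :=
      Finset.sum_eq_zero fun i _ => if_neg (by omega)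
    have hsum2 : ∑ i : Fin e, (if 0 = d + 1 + (i:ℕ) then terr i x else 0) = 0 :=
      Finset.sum_eq_zero fun i _ => if_neg (by omega)
    rw [hsum1, add_zero] at hd
    rw [hsum2, add_zero] at h00
    have hds : dsumPow (e+1) t default = t default := by
      simp only [dsumPow]
      rw [if_pos ⟨0, fun j => j.elim0⟩]
      exact congrArg t (Subsingleton.elim _ _)
    rw [hds]
    rcases Nat.eq_zero_or_pos d with h0d | h0d
    · subst h0d; simpa using hd.symm
    · rw [if_neg h0d.ne'] at hd
      rw [if_neg (by omega)] at h00
      rw [← hd, h00]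
  · -- main case k > 0
    obtain ⟨c, hc⟩ := vand_aux e d
    set v : Fin (e + 1) → ℂ := fun i => ((i : ℕ) : ℂ) + 1 with hv
    set j0 : Fin k := ⟨0, hk⟩ with hj0
    refine ⟨fun j x'' p => (if j = j0 then c p.1 else 1) * (m j x'' p.2).eval (v p.1),
      fun x' => ?_⟩
    have step1 : (∑ y : (j : Fin k) → Fin (e+1) × ι j,
        (∏ j, (if j = j0 then c (y j).1 else 1) * (m j (x' j) (y j).2).eval (v (y j).1))
          * dsumPow (e+1) t y)
      = ∑ a : (j : Fin k) → Fin (e+1), ∑ z : (j : Fin k) → ι j,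
          (∏ j, (if j = j0 then c (a j) else 1) * (m j (x' j) (z j)).eval (v (a j)))
            * dsumPow (e+1) t (fun j => (a j, z j)) := by
      rw [← Equiv.sum_comp (pairEquiv (fun _ => Fin (e+1)) ι), Fintype.sum_prod_type]
      rfl
    have step2 : ∀ (a : (j : Fin k) → Fin (e+1)) (z : (j : Fin k) → ι j),
        (∏ j, (if j = j0 then c (a j) else 1) * (m j (x' j) (z j)).eval (v (a j)))
            * dsumPow (e+1) t (fun j => (a j, z j))
        = ∑ i : Fin (e+1), if a = (fun _ => i) then
            (∏ j, (if j = j0 then c (a j) else 1) * (m j (x' j) (z j)).eval (v (a j))) * t z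
          else 0 := by
      intro a z
      simp only [dsumPow]
      by_cases hex : ∃ i : Fin (e+1), ∀ j, a j = i
      · obtain ⟨i0, hi0⟩ := hex
        have ha : a = fun _ => i0 := funext hi0
        rw [if_pos ⟨i0, fun j => hi0 j⟩, Finset.sum_eq_single i0]
        · rw [if_pos ha]
        · intro i _ hii
          rw [if_neg]
          intro hai
          exact hii ((congrFun hai j0).symm.trans (hi0 j0))
        · intro hmem; exact absurd (Finset.mem_univ i0) hmem
      · rw [if_neg hex, mul_zero, Finset.sum_eq_zero]
        intro i _
        rw [if_neg]
        intro hai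
        exact hex ⟨i, fun j => congrFun hai j⟩
    have step3 : ∀ i : Fin (e+1),
        (∑ z : (j : Fin k) → ι j,
          (∏ j, (if j = j0 then c i else 1) * (m j (x' j) (z j)).eval (v i)) * t z)
        = c i * (Polynomial.C (t' x') * Polynomial.X ^ d
            + ∑ r : Fin e, Polynomial.C (terr r x')
              * Polynomial.X ^ (d + 1 + (r : ℕ))).eval (v i) := by
      intro i
      have hterm : ∀ z : (j : Fin k) → ι j,
          (∏ j, (if j = j0 then c i else 1) * (m j (x' j) (z j)).eval (v i)) * t z
          = c i * ((∏ j, m j (x' j) (z j)) * Polynomial.C (t z)).eval (v i) := by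
        intro z
        rw [Finset.prod_mul_distrib, Finset.prod_ite_eq' Finset.univ j0 (fun _ => c i),
          Polynomial.eval_mul, Polynomial.eval_C, Polynomial.eval_prod]
        simp [mul_assoc]
      rw [Finset.sum_congr rfl fun z _ => hterm z, ← Finset.mul_sum,
        ← Polynomial.eval_finset_sum, h x']
    -- put everything together
    rw [step1, Finset.sum_congr rfl fun a _ => Finset.sum_congr rfl fun z _ => step2 a z]
    have swap1 : ∀ a : (j : Fin k) → Fin (e+1),
        (∑ z : (j : Fin k) → ι j, ∑ i : Fin (e+1), if a = (fun _ => i) then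
            (∏ j, (if j = j0 then c (a j) else 1) * (m j (x' j) (z j)).eval (v (a j))) * t z
          else 0)
        = ∑ i : Fin (e+1), ∑ z : (j : Fin k) → ι j, if a = (fun _ => i) then
            (∏ j, (if j = j0 then c (a j) else 1) * (m j (x' j) (z j)).eval (v (a j))) * t z
          else 0 := fun a => Finset.sum_comm
    rw [Finset.sum_congr rfl fun a _ => swap1 a, Finset.sum_comm]
    have pull : ∀ (i : Fin (e+1)) (a : (j : Fin k) → Fin (e+1)),
        (∑ z : (j : Fin k) → ι j, if a = (fun _ => i) then
            (∏ j, (if j = j0 then c (a j) else 1) * (m j (x' j) (z j)).eval (v (a j))) * t z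
          else 0)
        = if a = (fun _ => i) then
            (∑ z : (j : Fin k) → ι j,
              (∏ j, (if j = j0 then c (a j) else 1) * (m j (x' j) (z j)).eval (v (a j))) * t z)
          else 0 := by
      intro i a
      split_ifs <;> simp
    rw [Finset.sum_congr rfl fun i _ =>
      Finset.sum_congr rfl fun a _ => pull i a]
    rw [Finset.sum_congr rfl fun i (_ : i ∈ Finset.univ) =>
      Finset.sum_ite_eq' Finset.univ (fun _ => i)
        (fun a => ∑ z : (j : Fin k) → ι j,
          (∏ j, (if j = j0 then c (a j) else 1) * (m j (x' j) (z j)).eval (v (a j))) * t z)]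
    simp only [Finset.mem_univ, if_true]
    rw [Finset.sum_congr rfl fun i (_ : i ∈ Finset.univ) => step3 i]
    -- now evaluate
    have heval : ∀ i : Fin (e+1),
        (Polynomial.C (t' x') * Polynomial.X ^ d
          + ∑ r : Fin e, Polynomial.C (terr r x')
            * Polynomial.X ^ (d + 1 + (r : ℕ))).eval (v i)
        = t' x' * v i ^ d + ∑ r : Fin e, terr r x' * v i ^ (d + 1 + (r : ℕ)) := by
      intro i
      simp [Polynomial.eval_finset_sum]
    rw [Finset.sum_congr rfl fun i (_ : i ∈ Finset.univ) => congrArg (c i * ·) (heval i)]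
    have hc0' : ∑ i : Fin (e+1), c i * v i ^ d = 1 := by
      simp only [hv]
      simpa using hc 0
    have hcs : ∀ r : Fin e, ∑ i : Fin (e+1), c i * v i ^ (d + 1 + (r : ℕ)) = 0 := by
      intro r
      simp only [hv]
      have := hc r.succ
      simp only [Fin.val_succ] at this
      rw [show d + ((r : ℕ) + 1) = d + 1 + (r : ℕ) by omega] at this
      rw [this, if_neg (Fin.succ_ne_zero r)]
    have expand : ∀ i : Fin (e+1),
        c i * (t' x' * v i ^ d + ∑ r : Fin e, terr r x' * v i ^ (d + 1 + (r : ℕ)))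
        = t' x' * (c i * v i ^ d)
          + ∑ r : Fin e, terr r x' * (c i * v i ^ (d + 1 + (r : ℕ))) := by
      intro i
      rw [mul_add, Finset.mul_sum]
      congr 1
      · ring
      · exact Finset.sum_congr rfl fun r _ => by ring
    rw [Finset.sum_congr rfl fun i (_ : i ∈ Finset.univ) => expand i,
      Finset.sum_add_distrib, ← Finset.mul_sum, hc0', mul_one, Finset.sum_comm]
    have last : ∀ r : Fin e,
        (∑ i : Fin (e+1), terr r x' * (c i * v i ^ (d + 1 + (r : ℕ)))) = 0 := by
      intro r
      rw [← Finset.mul_sum, hcs r, mul_zero]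
    rw [Finset.sum_congr rfl fun r (_ : r ∈ Finset.univ) => last r]
    simp
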